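/- For any partial n-sun H_n, Z(H_n) ≤ sdim(H_n). -/

import Mathlib

open SimpleGraph

/-- One step of the zero forcing color-change rule: add every white vertex that is
the unique white neighbor of some black vertex. -/
def zfStep {V : Type*} (G : SimpleGraph V) (B : Set V) : Set V :=
  B ∪ {w | ∃ u ∈ B, G.Adj u w ∧ ∀ x, G.Adj u x → x ∉ B → x = w}

/-- `S` is a zero forcing set if iterating the color-change rule blackens all vertices. -/
def IsZeroForcingSet {V : Type*} (G : SimpleGraph V) (S : Set V) : Prop :=
  ∃ n : ℕ, (zfStep G)^[n] S = Set.univ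

/-- The zero forcing number: minimum cardinality of a zero forcing set. -/
noncomputable def zeroForcingNumber {V : Type*} (G : SimpleGraph V) : ℕ :=
  sInf {n | ∃ S : Set V, S.ncard = n ∧ IsZeroForcingSet G S}

/-- A (finite) graph is a path graph: nonempty, connected, acyclic, max degree ≤ 2. -/
def IsPathGraph {V : Type*} (G : SimpleGraph V) : Prop :=
  Nonempty V ∧ G.Connected ∧ G.IsAcyclic ∧ ∀ v : V, (G.neighborSet v).ncard ≤ 2

/-- The path cover number: minimum number of vertex-disjoint induced paths covering `V`. -/
noncomputable def pathCoverNumber {V : Type*} (G : SimpleGraph V) : ℕ :=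
  sInf {n | ∃ P : Finset (Set V), P.card = n ∧
    (∀ S ∈ P, IsPathGraph (G.induce S)) ∧
    (P : Set (Set V)).PairwiseDisjoint id ∧ ⋃₀ (P : Set (Set V)) = Set.univ}

/-- `u` lies on an `x`–`v` geodesic. -/
def LiesBetween {V : Type*} (G : SimpleGraph V) (x u v : V) : Prop :=
  G.dist x u + G.dist u v = G.dist x v

/-- `x` strongly resolves the pair `u, v`. -/
def StronglyResolves {V : Type*} (G : SimpleGraph V) (x u v : V) : Prop :=
  LiesBetween G x u v ∨ LiesBetween G x v u

/-- `W` is a strong resolving set of `G`. -/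
def IsStrongResolvingSet {V : Type*} (G : SimpleGraph V) (W : Set V) : Prop :=
  ∀ u v : V, u ≠ v → ∃ x ∈ W, StronglyResolves G x u v

/-- The strong metric dimension: minimum cardinality of a strong resolving set. -/
noncomputable def sdim {V : Type*} (G : SimpleGraph V) : ℕ :=
  sInf {n | ∃ W : Set V, W.ncard = n ∧ IsStrongResolvingSet G W}

/-- A leaf is a vertex of degree one. -/
def IsLeaf {V : Type*} (G : SimpleGraph V) (v : V) : Prop :=
  (G.neighborSet v).ncard = 1

/-- `σ(G)`: the number of leaves of `G`. -/
noncomputable def leafCount {V : Type*} (G : SimpleGraph V) : ℕ :=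
  {v | IsLeaf G v}.ncard

/-- The partial `n`-sun: the cycle `C_n` with one pendant leaf attached to each vertex in `U`. -/
def partialSun (n : ℕ) (U : Finset (Fin n)) : SimpleGraph (Fin n ⊕ {x // x ∈ U}) :=
  SimpleGraph.fromRel (fun a b =>
    match a, b with
    | Sum.inl i, Sum.inl j => (cycleGraph n).Adj i j
    | Sum.inl i, Sum.inr x => (x : Fin n) = i
    | _, _ => False)

namespace PartialSunAux
variable {n : ℕ} [NeZero n] {U : Finset (Fin n)}
open Fin.NatCast Fin.CommRing

abbrev SunV (n : ℕ) (U : Finset (Fin n)) := Fin n ⊕ {x // x ∈ U}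

def idx : SunV n U → Fin n := Sum.elim id (fun x => (x : Fin n))

lemma one_lt (hn : 3 ≤ n) : (1 : Fin n).val = 1 := by
  have : 1 % n = 1 := Nat.mod_eq_of_lt (by omega)
  simp [Fin.val_one', this]

lemma one_ne_zero' (hn : 3 ≤ n) : (1 : Fin n) ≠ 0 := by
  intro h
  have := one_lt (n := n) hn
  rw [h] at this
  simp at this

lemma cyc_adj (hn : 3 ≤ n) {i j : Fin n} :
    (cycleGraph n).Adj i j ↔ j = i + 1 ∨ j = i - 1 := by
  rw [cycleGraph_adj']
  have h1 : (1 : Fin n).val = 1 := one_lt hn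
  have e : ∀ x : Fin n, x.val = 1 ↔ x = 1 :=
    fun x => ⟨fun h => Fin.ext (by rw [h, h1]), fun h => by rw [h, h1]⟩
  rw [e, e]
  constructor
  · rintro (h | h)
    · right; rw [eq_sub_iff_add_eq, eq_add_of_sub_eq h, add_comm]
    · left; rw [eq_add_of_sub_eq h, add_comm]
  · rintro (h | h)
    · right; rw [h]; exact add_sub_cancel_left i 1
    · left; rw [h]; exact sub_sub_cancel i 1

lemma adj_inr (hn : 3 ≤ n) {x : {x // x ∈ U}} {b : SunV n U} :
    (partialSun n U).Adj (Sum.inr x) b ↔ b = Sum.inl (x : Fin n) := by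
  cases b with
  | inl j => simp [partialSun, fromRel_adj, eq_comm]
  | inr y => simp [partialSun, fromRel_adj]

lemma adj_inl (hn : 3 ≤ n) {i : Fin n} {b : SunV n U} :
    (partialSun n U).Adj (Sum.inl i) b ↔
      b = Sum.inl (i + 1) ∨ b = Sum.inl (i - 1) ∨ ∃ h : i ∈ U, b = Sum.inr ⟨i, h⟩ := by
  cases b with
  | inl j =>
    have hne1 : i + 1 ≠ i := by
      intro h
      exact one_ne_zero' hn (by rwa [add_eq_left] at h)
    have hne2 : i - 1 ≠ i := by
      intro h
      exact one_ne_zero' hn (by rwa [sub_eq_self] at h)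
    simp only [partialSun, fromRel_adj, ne_eq, Sum.inl.injEq, reduceCtorEq, exists_false,
      or_false]
    rw [(cycleGraph n).adj_comm j i, or_self, cyc_adj hn]
    constructor
    · exact fun h => h.2
    · rintro (h | h)
      · exact ⟨fun he => hne1 (he.trans h).symm, Or.inl h⟩
      · exact ⟨fun he => hne2 (he.trans h).symm, Or.inr h⟩
  | inr x =>
    simp only [partialSun, fromRel_adj, ne_eq, reduceCtorEq, not_false_iff, false_or, true_and,
      Sum.inr.injEq, or_false]
    constructor
    · intro h
      exact ⟨h ▸ x.2, Subtype.ext h⟩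
    · rintro ⟨h, rfl⟩
      rfl

lemma adj_step (hn : 3 ≤ n) (i : Fin n) :
    (partialSun n U).Adj (Sum.inl i) (Sum.inl (i + 1)) :=
  (adj_inl hn).mpr (Or.inl rfl)

lemma adj_step' (hn : 3 ≤ n) (i : Fin n) :
    (partialSun n U).Adj (Sum.inl i) (Sum.inl (i - 1)) :=
  (adj_inl hn).mpr (Or.inr (Or.inl rfl))

lemma adj_leaf (hn : 3 ≤ n) (x : {x // x ∈ U}) :
    (partialSun n U).Adj (Sum.inr x) (Sum.inl (x : Fin n)) :=
  (adj_inr hn).mpr rfl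

/-! ### walks and distances -/

lemma walk_plus (hn : 3 ≤ n) (i : Fin n) (m : ℕ) :
    ∃ p : (partialSun n U).Walk (Sum.inl i) (Sum.inl (i + (m : Fin n))), p.length = m := by
  induction m with
  | zero =>
    refine ⟨Walk.nil.copy rfl (by simp), ?_⟩
    simp
  | succ m ih =>
    obtain ⟨p, hp⟩ := ih
    have he : Sum.inl (α := Fin n) (β := {x // x ∈ U}) (i + ((m : ℕ) : Fin n) + 1)
        = Sum.inl (i + (((m + 1 : ℕ)) : Fin n)) := by
      rw [Nat.cast_add_one, add_assoc]
    refine ⟨(p.concat (adj_step hn _)).copy rfl he, ?_⟩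
    simp [Walk.length_concat, hp]

lemma reach (hn : 3 ≤ n) (u v : SunV n U) : (partialSun n U).Reachable u v := by
  have base : ∀ i j : Fin n, (partialSun n U).Reachable (Sum.inl i) (Sum.inl j) := by
    intro i j
    obtain ⟨p, -⟩ := walk_plus (U := U) hn i (j - i).val
    rw [Fin.cast_val_eq_self, add_sub_cancel] at p
    exact ⟨p⟩
  cases u with
  | inl i =>
    cases v with
    | inl j => exact base i j
    | inr y => exact (base i y).trans (adj_leaf hn y).reachable.symm
  | inr x =>
    cases v with
    | inl j => exact (adj_leaf hn x).reachable.trans (base _ j)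
    | inr y =>
      exact Reachable.trans ((adj_leaf hn x).reachable.trans (base _ y))
        (adj_leaf hn y).reachable.symm

lemma connected (hn : 3 ≤ n) : (partialSun n U).Connected := by
  have : Nonempty (SunV n U) := ⟨Sum.inl 0⟩
  exact ⟨fun u v => reach hn u v⟩

lemma dist_le_walk (hn : 3 ≤ n) (i : Fin n) (m : ℕ) :
    (partialSun n U).dist (Sum.inl i) (Sum.inl (i + (m : Fin n))) ≤ m := by
  obtain ⟨p, hp⟩ := walk_plus (U := U) hn i m
  exact le_trans (dist_le p) (le_of_eq hp)

lemma val_sub_add (hn : 3 ≤ n) {i j : Fin n} (h : i ≠ j) :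
    (j - i).val + (i - j).val = n := by
  have h1 := Fin.coe_int_sub_eq_ite j i
  have h2 := Fin.coe_int_sub_eq_ite i j
  have hvne : i.val ≠ j.val := fun hh => h (Fin.ext hh)
  have := i.is_lt
  have := j.is_lt
  split at h1 <;> split at h2 <;> omega

lemma dist_inl_le' (hn : 3 ≤ n) (i j : Fin n) :
    (partialSun n U).dist (Sum.inl i) (Sum.inl j) ≤ (j - i).val := by
  have := dist_le_walk (U := U) hn i (j - i).val
  rwa [Fin.cast_val_eq_self, add_sub_cancel] at this

lemma dist_inl_le (hn : 3 ≤ n) (i j : Fin n) :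
    (partialSun n U).dist (Sum.inl i) (Sum.inl j) ≤ n / 2 := by
  rcases eq_or_ne i j with rfl | h
  · rw [dist_self]; omega
  · have h1 := dist_inl_le' (U := U) hn i j
    have h2 := dist_inl_le' (U := U) hn j i
    rw [dist_comm] at h2
    have := val_sub_add hn h
    omega

lemma lip_walk (f : SunV n U → ℕ)
    (hf : ∀ a b, (partialSun n U).Adj a b → f b ≤ f a + 1) {u v : SunV n U}
    (p : (partialSun n U).Walk u v) : f v ≤ f u + p.length := by
  induction p with
  | nil => simp
  | cons h q ih =>
    have := hf _ _ h
    simp only [Walk.length_cons]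
    omega

lemma lip (hn : 3 ≤ n) (f : SunV n U → ℕ)
    (hf : ∀ a b, (partialSun n U).Adj a b → f b ≤ f a + 1) (u v : SunV n U) :
    f v ≤ f u + (partialSun n U).dist u v := by
  obtain ⟨p, hp⟩ := (reach hn u v).exists_walk_length_eq_dist
  exact hp ▸ lip_walk f hf p

lemma step_bound (hn : 3 ≤ n) (x : Fin n) :
    min (x + 1).val (n - (x + 1).val) ≤ min x.val (n - x.val) + 1 ∧
      min x.val (n - x.val) ≤ min (x + 1).val (n - (x + 1).val) + 1 := by
  have h1 := Fin.coe_int_add_eq_ite x 1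
  have hv1 : ((1 : Fin n) : ℤ) = 1 := by rw [one_lt hn]; norm_num
  have := x.is_lt
  have := (x + 1).is_lt
  rw [hv1] at h1
  split at h1 <;> omega

/-- the cycle-metric potential centered at `i` -/
def pot (n : ℕ) [NeZero n] (U : Finset (Fin n)) (i : Fin n) (v : SunV n U) : ℕ :=
  min (idx v - i).val (n - (idx v - i).val)

lemma pot_lip (hn : 3 ≤ n) (i : Fin n) :
    ∀ a b, (partialSun n U).Adj a b → pot n U i b ≤ pot n U i a + 1 := by
  intro a b hab
  cases a with
  | inl i' =>
    rcases (adj_inl hn).mp hab with rfl | rfl | ⟨h, rfl⟩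
    · have := (step_bound hn (i' - i)).1
      have he : i' - i + 1 = i' + 1 - i := by ring
      rw [he] at this
      exact this
    · have := (step_bound hn (i' - 1 - i)).2
      have he : i' - 1 - i + 1 = i' - i := by ring
      rw [he] at this
      exact this
    · simp [pot, idx]
  | inr x =>
    rw [(adj_inr hn).mp hab]
    simp [pot, idx]

lemma dist_antipodal (hn : 3 ≤ n) (i : Fin n) :
    (partialSun n U).dist (Sum.inl i) (Sum.inl (i + ((n / 2 : ℕ) : Fin n))) = n / 2 := by
  have hk : ((n / 2 : ℕ) : Fin n).val = n / 2 := by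
    rw [Fin.val_natCast, Nat.mod_eq_of_lt (by omega)]
  have hub : _ ≤ n / 2 := dist_le_walk (U := U) hn i (n / 2)
  have hlb := lip hn (pot n U i) (pot_lip hn i) (Sum.inl i) (Sum.inl (i + ((n / 2 : ℕ) : Fin n)))
  simp only [pot, idx, Sum.elim_inl, id_eq, sub_self, add_sub_cancel_left, Fin.val_zero] at hlb
  rw [hk] at hlb
  omega

lemma dist_inr (hn : 3 ≤ n) (x : {x // x ∈ U}) (j : Fin n) :
    (partialSun n U).dist (Sum.inr x) (Sum.inl j)
      = 1 + (partialSun n U).dist (Sum.inl (x : Fin n)) (Sum.inl j) := by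
  apply le_antisymm
  · obtain ⟨p, hp⟩ := (reach (U := U) hn (Sum.inl (x : Fin n)) (Sum.inl j)).exists_walk_length_eq_dist
    have := dist_le (Walk.cons (adj_leaf hn x) p)
    simp only [Walk.length_cons, hp] at this
    omega
  · obtain ⟨p, hp⟩ := (reach (U := U) hn (Sum.inr x) (Sum.inl j)).exists_walk_length_eq_dist
    cases p with
    | cons h q =>
      have hy := (adj_inr hn).mp h
      subst hy
      have := dist_le q
      simp only [Walk.length_cons] at hp
      omega

/-! ### sdim lower bound -/

lemma resolve_idx (hn : 3 ≤ n) {x : SunV n U} {a b : Fin n}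
    (hab : (partialSun n U).dist (Sum.inl a) (Sum.inl b) = n / 2)
    (h : LiesBetween (partialSun n U) x (Sum.inl a) (Sum.inl b)) : idx x = a := by
  unfold LiesBetween at h
  rw [hab] at h
  cases x with
  | inl m =>
    have hub := dist_inl_le (U := U) hn m b
    have h0 : (partialSun n U).dist (Sum.inl m) (Sum.inl a) = 0 := by omega
    have := (reach (U := U) hn _ _).dist_eq_zero_iff.mp h0
    rw [Sum.inl.injEq] at this
    simpa [idx] using this
  | inr y =>
    rw [dist_inr hn y a, dist_inr hn y b] at h
    have hub := dist_inl_le (U := U) hn (↑y) b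
    have h0 : (partialSun n U).dist (Sum.inl (y : Fin n)) (Sum.inl a) = 0 := by omega
    have := (reach (U := U) hn _ _).dist_eq_zero_iff.mp h0
    rw [Sum.inl.injEq] at this
    simpa [idx] using this

lemma key (hn : 3 ≤ n) {W : Set (SunV n U)} (hW : IsStrongResolvingSet (partialSun n U) W)
    (i : Fin n) :
    ∃ w ∈ W, idx w = i ∨ idx w = i + ((n / 2 : ℕ) : Fin n) := by
  set k : Fin n := ((n / 2 : ℕ) : Fin n) with hkdef
  have hkval : k.val = n / 2 := by
    rw [hkdef, Fin.val_natCast, Nat.mod_eq_of_lt (by omega)]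
  have hne : (Sum.inl i : SunV n U) ≠ Sum.inl (i + k) := by
    intro h
    rw [Sum.inl.injEq, left_eq_add] at h
    rw [h] at hkval
    simp at hkval
    omega
  obtain ⟨x, hxW, hres⟩ := hW _ _ hne
  refine ⟨x, hxW, ?_⟩
  have hd : (partialSun n U).dist (Sum.inl i) (Sum.inl (i + k)) = n / 2 := dist_antipodal hn i
  rcases hres with h | h
  · exact Or.inl (resolve_idx hn hd h)
  · refine Or.inr (resolve_idx hn ?_ h)
    rw [SimpleGraph.dist_comm]
    exact hd

lemma srs_univ (hn : 3 ≤ n) : IsStrongResolvingSet (partialSun n U) Set.univ := by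
  intro u v _
  exact ⟨u, trivial, Or.inl (by simp [LiesBetween, dist_self])⟩

lemma sdim_lower (hn : 3 ≤ n) : (n + 1) / 2 ≤ sdim (partialSun n U) := by
  apply le_csInf
  · exact ⟨(Set.univ : Set (SunV n U)).ncard, Set.univ, rfl, srs_univ hn⟩
  · rintro m ⟨W, hcard, hW⟩
    set k : Fin n := ((n / 2 : ℕ) : Fin n) with hkdef
    set Wn : Set (Fin n) := idx '' W with hWn
    have h1 : Wn.ncard ≤ m := hcard ▸ Set.ncard_image_le (Set.toFinite W)
    have hcover : ∀ i : Fin n, i ∈ Wn ∨ i + k ∈ Wn := by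
      intro i
      obtain ⟨w, hw, hc | hc⟩ := key hn hW i
      · exact Or.inl ⟨w, hw, hc⟩
      · exact Or.inr ⟨w, hw, hc⟩
    have hsub : (fun x => x + k) '' Wnᶜ ⊆ Wn := by
      rintro _ ⟨i, hi, rfl⟩
      rcases hcover i with h | h
      · exact absurd h hi
      · exact h
    have h2 : Wnᶜ.ncard ≤ Wn.ncard := by
      rw [← Set.ncard_image_of_injective Wnᶜ (add_left_injective k)]
      exact Set.ncard_le_ncard hsub (Set.toFinite _)
    have h3 : Wn.ncard + Wnᶜ.ncard = n := by
      rw [Set.ncard_add_ncard_compl]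
      simp [Nat.card_eq_fintype_card]
    omega

/-! ### zero forcing: generic machinery -/

section Generic

variable {V : Type*} [Fintype V] {G : SimpleGraph V}

lemma subset_zfStep (G : SimpleGraph V) (B : Set V) : B ⊆ zfStep G B :=
  Set.subset_union_left

lemma subset_iterate (G : SimpleGraph V) (B : Set V) (t : ℕ) : B ⊆ (zfStep G)^[t] B := by
  induction t with
  | zero => simp
  | succ t ih =>
    rw [Function.iterate_succ_apply']
    exact ih.trans (subset_zfStep G _)

lemma zf_of_closed (G : SimpleGraph V) (B : Set V)
    (h : ∀ C : Set V, B ⊆ C → zfStep G C ⊆ C → C = Set.univ) : IsZeroForcingSet G B := by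
  have grow : ∀ t : ℕ, (∀ s < t, (zfStep G)^[s + 1] B ≠ (zfStep G)^[s] B) →
      t ≤ ((zfStep G)^[t] B).ncard := by
    intro t
    induction t with
    | zero => intro _; omega
    | succ t ih =>
      intro hs
      have h1 := ih (fun s hst => hs s (by omega))
      have hssub : (zfStep G)^[t] B ⊂ (zfStep G)^[t + 1] B := by
        refine ssubset_of_ne_of_subset (hs t (by omega)).symm ?_
        rw [Function.iterate_succ_apply']
        exact subset_zfStep G _
      have := Set.ncard_lt_ncard hssub (Set.toFinite _)
      omega
  have hex : ∃ t, (zfStep G)^[t + 1] B = (zfStep G)^[t] B := by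
    by_contra hc
    push_neg at hc
    have h1 := grow (Fintype.card V + 1) (fun s _ => hc s)
    have h2 : ((zfStep G)^[Fintype.card V + 1] B).ncard ≤ Fintype.card V := by
      have := Set.ncard_le_ncard (Set.subset_univ ((zfStep G)^[Fintype.card V + 1] B))
        Set.finite_univ
      rwa [Set.ncard_univ, Nat.card_eq_fintype_card] at this
    omega
  obtain ⟨t, ht⟩ := hex
  rw [Function.iterate_succ_apply'] at ht
  exact ⟨t, h _ (subset_iterate G B t) (le_of_eq ht)⟩

end Generic

/-! ### the forcing set -/

def PSet (n : ℕ) : Set (Fin n) := {i | i.val = 0 ∨ (i.val % 2 = 1 ∧ i.val < n - 1)}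

def pvert (n : ℕ) [NeZero n] (U : Finset (Fin n)) (i : Fin n) : SunV n U :=
  if h : i ∈ U then Sum.inr ⟨i, h⟩ else Sum.inl i

def BSet (n : ℕ) [NeZero n] (U : Finset (Fin n)) : Set (SunV n U) :=
  pvert n U '' PSet n

lemma BSet_card (hn : 3 ≤ n) : (BSet n U).ncard ≤ (n + 1) / 2 := by
  have h1 : (BSet n U).ncard ≤ (PSet n).ncard := Set.ncard_image_le (Set.toFinite _)
  have h2 : (PSet n).ncard ≤ (n + 1) / 2 := by
    have hinj : Set.InjOn (fun i : Fin n => (⟨min ((i.val + 1) / 2) ((n - 1) / 2), by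
        omega⟩ : Fin ((n + 1) / 2))) (PSet n) := by
      intro a ha b hb hab
      simp only [Fin.mk.injEq] at hab
      simp only [PSet, Set.mem_setOf_eq] at ha hb
      apply Fin.ext
      omega
    calc (PSet n).ncard
        = ((fun i : Fin n => (⟨min ((i.val + 1) / 2) ((n - 1) / 2), by omega⟩ :
            Fin ((n + 1) / 2))) '' PSet n).ncard := (Set.ncard_image_of_injOn hinj).symm
      _ ≤ (Set.univ : Set (Fin ((n + 1) / 2))).ncard :=
          Set.ncard_le_ncard (Set.subset_univ _) Set.finite_univ
      _ = (n + 1) / 2 := by rw [Set.ncard_univ, Nat.card_eq_fintype_card, Fintype.card_fin]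
  omega

lemma mk_add_one (hn : 3 ≤ n) (a : ℕ) (h : a + 1 < n) :
    (⟨a, by omega⟩ : Fin n) + 1 = ⟨a + 1, h⟩ := by
  apply Fin.ext
  rw [Fin.add_def]
  simp only [one_lt hn]
  exact Nat.mod_eq_of_lt h

lemma mk_sub_one (hn : 3 ≤ n) (a : ℕ) (h : a < n) (h1 : 1 ≤ a) :
    (⟨a, h⟩ : Fin n) - 1 = ⟨a - 1, by omega⟩ := by
  apply Fin.ext
  rw [Fin.sub_def]
  simp only [one_lt hn]
  have e : n - 1 + a = (a - 1) + n := by omega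
  rw [e, Nat.add_mod_right]
  exact Nat.mod_eq_of_lt (by omega)

lemma mk_zero_add (hn : 3 ≤ n) (h : (0 : ℕ) < n) :
    (⟨0, h⟩ : Fin n) + 1 = ⟨1, by omega⟩ := by
  apply Fin.ext
  rw [Fin.add_def]
  simp only [one_lt hn]
  exact Nat.mod_eq_of_lt (by omega)

lemma mk_zero_sub (hn : 3 ≤ n) (h : (0 : ℕ) < n) :
    (⟨0, h⟩ : Fin n) - 1 = ⟨n - 1, by omega⟩ := by
  apply Fin.ext
  rw [Fin.sub_def]
  simp only [one_lt hn]
  exact Nat.mod_eq_of_lt (by omega)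

lemma closed_univ (hn : 3 ≤ n) (C : Set (SunV n U)) (hBC : BSet n U ⊆ C)
    (hC : zfStep (partialSun n U) C ⊆ C) : C = Set.univ := by
  have force : ∀ u ∈ C, ∀ w, (partialSun n U).Adj u w →
      (∀ x, (partialSun n U).Adj u x → x ≠ w → x ∈ C) → w ∈ C := by
    intro u hu w hadj hall
    apply hC
    refine Set.mem_union_right _ ⟨u, hu, hadj, ?_⟩
    intro x hx hxC
    by_contra hne
    exact hxC (hall x hx hne)
  have step0 : ∀ i ∈ PSet n, (Sum.inl i : SunV n U) ∈ C ∧ ∀ h : i ∈ U, Sum.inr ⟨i, h⟩ ∈ C := by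
    intro i hi
    by_cases h : i ∈ U
    · have hB : (Sum.inr ⟨i, h⟩ : SunV n U) ∈ C := hBC ⟨i, hi, by simp [pvert, h]⟩
      refine ⟨?_, fun _ => hB⟩
      refine force _ hB _ (adj_leaf hn ⟨i, h⟩) ?_
      intro x hx hne
      exact absurd ((adj_inr hn).mp hx) hne
    · exact ⟨hBC ⟨i, hi, by simp [pvert, h]⟩, fun h' => absurd h' h⟩
  have relay : ∀ i ∈ PSet n, (Sum.inl (i - 1) : SunV n U) ∈ C →
      (Sum.inl (i + 1) : SunV n U) ∈ C := by
    intro i hi hprev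
    refine force _ (step0 i hi).1 _ (adj_step hn i) ?_
    intro x hx hne
    rcases (adj_inl hn).mp hx with rfl | rfl | ⟨h, rfl⟩
    · exact absurd rfl hne
    · exact hprev
    · exact (step0 i hi).2 h
  have relay' : ∀ i ∈ PSet n, (Sum.inl (i + 1) : SunV n U) ∈ C →
      (Sum.inl (i - 1) : SunV n U) ∈ C := by
    intro i hi hprev
    refine force _ (step0 i hi).1 _ (adj_step' hn i) ?_
    intro x hx hne
    rcases (adj_inl hn).mp hx with rfl | rfl | ⟨h, rfl⟩
    · exact hprev
    · exact absurd rfl hne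
    · exact (step0 i hi).2 h
  have all_inl : ∀ (j : ℕ) (hj : j < n), (Sum.inl (⟨j, hj⟩ : Fin n) : SunV n U) ∈ C := by
    intro j
    induction j using Nat.strong_induction_on with
    | _ j ih =>
      intro hj
      rcases Nat.eq_zero_or_pos j with rfl | hpos
      · exact (step0 ⟨0, by omega⟩ (Or.inl rfl)).1
      by_cases hodd : j % 2 = 1
      · by_cases hlt : j < n - 1
        · exact (step0 ⟨j, hj⟩ (Or.inr ⟨hodd, hlt⟩)).1
        · have hj1 : j = n - 1 := by omega
          have h4 : 4 ≤ n := by omega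
          have h0P : (⟨0, by omega⟩ : Fin n) ∈ PSet n := Or.inl rfl
          have h1C : (Sum.inl ((⟨0, by omega⟩ : Fin n) + 1) : SunV n U) ∈ C := by
            rw [mk_zero_add hn]
            exact (step0 ⟨1, by omega⟩ (Or.inr ⟨show 1 % 2 = 1 from by omega,
              show 1 < n - 1 from by omega⟩)).1
          have hres := relay' _ h0P h1C
          rw [mk_zero_sub hn] at hres
          have e : (⟨n - 1, by omega⟩ : Fin n) = ⟨j, hj⟩ := Fin.ext (by simp; omega)
          rwa [e] at hres
      · have h2 : 2 ≤ j := by omega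
        have hiP : (⟨j - 1, by omega⟩ : Fin n) ∈ PSet n :=
          Or.inr ⟨show (j - 1) % 2 = 1 from by omega, show j - 1 < n - 1 from by omega⟩
        have hprev : (Sum.inl ((⟨j - 1, by omega⟩ : Fin n) - 1) : SunV n U) ∈ C := by
          rw [mk_sub_one hn (j - 1) (by omega) (by omega)]
          exact ih (j - 1 - 1) (by omega) (by omega)
        have hres := relay _ hiP hprev
        rw [mk_add_one hn (j - 1) (by omega)] at hres
        have e : (⟨j - 1 + 1, by omega⟩ : Fin n) = ⟨j, hj⟩ := Fin.ext (by simp; omega)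
        rwa [e] at hres
  have hcyc : ∀ i : Fin n, (Sum.inl i : SunV n U) ∈ C := by
    intro i
    have := all_inl i.val i.is_lt
    rwa [Fin.eta] at this
  have hleaf : ∀ x : {x // x ∈ U}, (Sum.inr x : SunV n U) ∈ C := by
    intro x
    refine force _ (hcyc (x : Fin n)) _
      ((adj_inl hn).mpr (Or.inr (Or.inr ⟨x.2, rfl⟩))) ?_
    intro y hy hne
    rcases (adj_inl hn).mp hy with rfl | rfl | ⟨h, rfl⟩
    · exact hcyc _
    · exact hcyc _
    · exact absurd rfl hne
  rw [Set.eq_univ_iff_forall]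
  intro v
  cases v with
  | inl i => exact hcyc i
  | inr x => exact hleaf x

lemma zf_upper (hn : 3 ≤ n) : zeroForcingNumber (partialSun n U) ≤ (n + 1) / 2 := by
  have hzfs : IsZeroForcingSet (partialSun n U) (BSet n U) :=
    zf_of_closed _ _ (fun C hBC hC => closed_univ hn C hBC hC)
  have h1 : zeroForcingNumber (partialSun n U) ≤ (BSet n U).ncard :=
    Nat.sInf_le ⟨BSet n U, rfl, hzfs⟩
  exact h1.trans (BSet_card hn)

end PartialSunAux

/-- For any partial `n`-sun, the zero forcing number is at most the strong metric dimension. -/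
theorem zeroForcingNumber_partialSun_le_sdim (n : ℕ) (h3 : 3 ≤ n) (U : Finset (Fin n)) :
    zeroForcingNumber (partialSun n U) ≤ sdim (partialSun n U) := by
  haveI : NeZero n := ⟨by omega⟩
  exact le_trans (PartialSunAux.zf_upper h3) (PartialSunAux.sdim_lower h3)
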